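/- Let $K$ be a real symmetric $p\times p$ matrix and $\alpha>0$. If $X$ is a real symmetric positive definite $p\times p$ matrix that commutes with $K$, then $X' := \tfrac{1}{2}\big(X + X^{-1}(K^2+\alpha I)\big)$ is symmetric, positive definite, and commutes with $K$. -/

import Mathlib

lemma posDef_smul_aux {p : ℕ} {M : Matrix (Fin p) (Fin p) ℝ} (hM : M.PosDef)
    {c : ℝ} (hc : 0 < c) : (c • M).PosDef := by
  refine ⟨?_, fun x hx => ?_⟩
  · unfold Matrix.IsHermitian at *
    rw [Matrix.conjTranspose_smul, hM.1]
    simp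
  · convert mul_pos hc (hM.2 hx) using 1
    simp only [Finsupp.mul_sum, Matrix.smul_apply, smul_eq_mul]
    congr 1; ext i xi; congr 1; ext j xj; simp only [star_trivial]; ring

/-- One step of the matrix Newton iteration preserves symmetry, positive
definiteness, and commutation with `K`. -/
theorem matrix_newton_step_posDef_commute (p : ℕ) (K : Matrix (Fin p) (Fin p) ℝ)
    (hK : K.IsHermitian) (α : ℝ) (hα : 0 < α) (X : Matrix (Fin p) (Fin p) ℝ)
    (hX : X.PosDef) (hcomm : X * K = K * X) :
    ((1 / 2 : ℝ) • (X + X⁻¹ * (K ^ 2 + α • (1 : Matrix (Fin p) (Fin p) ℝ)))).PosDef ∧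
      (1 / 2 : ℝ) • (X + X⁻¹ * (K ^ 2 + α • (1 : Matrix (Fin p) (Fin p) ℝ))) * K =
        K * ((1 / 2 : ℝ) • (X + X⁻¹ * (K ^ 2 + α • (1 : Matrix (Fin p) (Fin p) ℝ)))) := by
  have hXinv : X⁻¹.PosDef := hX.inv
  have hunit : IsUnit X := hX.isUnit
  have hXinvX : X⁻¹ * X = 1 := Matrix.nonsing_inv_mul X (Matrix.isUnit_iff_isUnit_det X |>.mp hunit)
  have hXXinv : X * X⁻¹ = 1 := Matrix.mul_nonsing_inv X (Matrix.isUnit_iff_isUnit_det X |>.mp hunit)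
  have hcomm' : X⁻¹ * K = K * X⁻¹ := by
    calc X⁻¹ * K = X⁻¹ * K * (X * X⁻¹) := by rw [hXXinv, mul_one]
    _ = X⁻¹ * (K * X) * X⁻¹ := by simp only [mul_assoc]
    _ = X⁻¹ * (X * K) * X⁻¹ := by rw [hcomm]
    _ = (X⁻¹ * X) * (K * X⁻¹) := by simp only [mul_assoc]
    _ = K * X⁻¹ := by rw [hXinvX, one_mul]
  -- rewrite X⁻¹ * (K^2 + αI) = K * X⁻¹ * K.conjTranspose + α • X⁻¹
  have key : X⁻¹ * (K ^ 2 + α • (1 : Matrix (Fin p) (Fin p) ℝ)) =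
      K * X⁻¹ * K.conjTranspose + α • X⁻¹ := by
    rw [hK.eq]
    rw [mul_add, Matrix.mul_smul, mul_one, pow_two, ← mul_assoc, hcomm']
  constructor
  · refine posDef_smul_aux ?_ (by norm_num)
    have h1 : (K * X⁻¹ * K.conjTranspose).PosSemidef := hXinv.posSemidef.mul_mul_conjTranspose_same K
    have h2 : (α • X⁻¹).PosDef := posDef_smul_aux hXinv hα
    have h3 : (X⁻¹ * (K ^ 2 + α • (1 : Matrix (Fin p) (Fin p) ℝ))).PosDef := by
      rw [key]; exact Matrix.PosDef.posSemidef_add h1 h2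
    exact hX.add h3
  · have hK2 : X⁻¹ * (K ^ 2 + α • (1 : Matrix (Fin p) (Fin p) ℝ)) * K =
        K * (X⁻¹ * (K ^ 2 + α • (1 : Matrix (Fin p) (Fin p) ℝ))) := by
      have : (K ^ 2 + α • (1 : Matrix (Fin p) (Fin p) ℝ)) * K =
          K * (K ^ 2 + α • (1 : Matrix (Fin p) (Fin p) ℝ)) := by
        rw [add_mul, mul_add, Matrix.smul_mul, Matrix.mul_smul, one_mul, mul_one,
          pow_two, mul_assoc]
      rw [mul_assoc, this, ← mul_assoc, hcomm', mul_assoc]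
    have hK2' : (X + X⁻¹ * (K ^ 2 + α • (1 : Matrix (Fin p) (Fin p) ℝ))) * K =
        K * (X + X⁻¹ * (K ^ 2 + α • (1 : Matrix (Fin p) (Fin p) ℝ))) := by
      rw [add_mul, hcomm, hK2]
      exact (mul_add K X _).symm
    rw [Matrix.smul_mul, hK2', Matrix.mul_smul]
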